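/- The geodesic distance on the unit sphere Sⁿ (n ≥ 1), given by d(x,y) = arccos⟨x,y⟩, is a kernel of negative type. -/

import Mathlib

open Real Finset

noncomputable def sphC (k : ℕ) : ℝ := (Nat.centralBinom k : ℝ) / 4 ^ k

lemma sphC_pos (k : ℕ) : 0 < sphC k := by
  apply div_pos (by exact_mod_cast Nat.centralBinom_pos k) (by positivity)

lemma sphC_le_one (k : ℕ) : sphC k ≤ 1 := by
  rw [sphC, div_le_one (by positivity)]
  have h : Nat.centralBinom k ≤ 4 ^ k := by
    have := Finset.single_le_sum (f := fun m => (2 * k).choose m)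
      (fun i _ => Nat.zero_le _) (Finset.self_mem_range_succ k)
    calc Nat.centralBinom k = (2 * k).choose k := Nat.centralBinom_eq_two_mul_choose k
      _ ≤ ∑ m ∈ Finset.range (2 * k + 1), (2 * k).choose m :=
          Finset.single_le_sum (fun i _ => Nat.zero_le _)
            (by simp [Nat.lt_succ_iff]; omega)
      _ = 2 ^ (2 * k) := Nat.sum_range_choose (2 * k)
      _ = 4 ^ k := by rw [pow_mul]; norm_num
  exact_mod_cast h

lemma sphC_rec (k : ℕ) : (2 * (k + 1) : ℝ) * sphC (k + 1) = (2 * k + 1) * sphC k := by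
  have h := Nat.succ_mul_centralBinom_succ k
  have h' : ((k + 1 : ℕ) : ℝ) * (Nat.centralBinom (k + 1) : ℝ)
      = 2 * (2 * k + 1) * (Nat.centralBinom k : ℝ) := by exact_mod_cast h
  push_cast at h'
  rw [sphC, sphC]
  have h4 : (4 : ℝ) ^ (k + 1) = 4 * 4 ^ k := by ring
  field_simp [h4]
  linear_combination (2 * (4:ℝ) ^ k) * h'

lemma sphC_bound (k : ℕ) {y : ℝ} (hy : |y| ≤ 1) (e : ℕ) (he : k ≤ e) :
    |sphC k * y ^ e| ≤ |y| ^ k := by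
  rw [abs_mul, abs_pow]
  calc |sphC k| * |y| ^ e ≤ 1 * |y| ^ k := by
        apply mul_le_mul _ (pow_le_pow_of_le_one (abs_nonneg y) hy he) (by positivity) zero_le_one
        rw [abs_of_pos (sphC_pos k)]; exact sphC_le_one k
    _ = |y| ^ k := one_mul _

lemma summable_S {y : ℝ} (hy : |y| < 1) : Summable (fun k => sphC k * y ^ (2 * k)) := by
  apply Summable.of_norm_bounded (g := fun k => |y| ^ k) (summable_geometric_of_lt_one (abs_nonneg y) hy)
  intro k
  exact sphC_bound k hy.le (2 * k) (by omega)

lemma summable_G {y : ℝ} (hy : |y| < 1) :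
    Summable (fun k => sphC k / (2 * k + 1) * y ^ (2 * k + 1)) := by
  apply Summable.of_norm_bounded (g := fun k => |y| ^ k) (summable_geometric_of_lt_one (abs_nonneg y) hy)
  intro k
  have h1 : |sphC k / (2 * (k:ℝ) + 1) * y ^ (2 * k + 1)| ≤ |sphC k * y ^ (2 * k + 1)| := by
    rw [abs_mul, abs_mul, abs_div]
    apply mul_le_mul_of_nonneg_right _ (abs_nonneg _)
    apply div_le_self (abs_nonneg _)
    rw [abs_of_pos (by positivity)]; linarith [Nat.cast_nonneg (α := ℝ) k]
  exact h1.trans (sphC_bound k hy.le (2 * k + 1) (by omega))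

lemma summable_T {y : ℝ} (hy : |y| < 1) :
    Summable (fun k : ℕ => 2 * (k:ℝ) * sphC k * y ^ (2 * k - 1)) := by
  apply Summable.of_norm_bounded (g := fun k : ℕ => 2 * (k:ℝ) * |y| ^ k)
  · have := summable_pow_mul_geometric_of_norm_lt_one (R := ℝ) 1 (r := |y|) (by simpa using hy)
    simp only [pow_one] at this
    simpa [mul_assoc] using this.mul_left 2
  · intro k
    rcases Nat.eq_zero_or_pos k with rfl | hk
    · simp
    rw [Real.norm_eq_abs, abs_mul, abs_mul, abs_mul, abs_pow, abs_two, Nat.abs_cast,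
      abs_of_pos (sphC_pos k)]
    apply mul_le_mul
    · nlinarith [sphC_le_one k, sphC_pos k, Nat.cast_nonneg (α := ℝ) k]
    · exact pow_le_pow_of_le_one (abs_nonneg y) hy.le (by omega)
    · positivity
    · positivity

noncomputable def Sfun (z : ℝ) : ℝ := ∑' k : ℕ, sphC k * z ^ (2 * k)
noncomputable def Gfun (z : ℝ) : ℝ := ∑' k : ℕ, sphC k / (2 * k + 1) * z ^ (2 * k + 1)

lemma ball_abs {y z : ℝ} (hy : |y| < 1) (hz : z ∈ Metric.ball (0:ℝ) ((|y| + 1) / 2)) :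
    |z| < (|y| + 1) / 2 := by
  simpa [Real.dist_eq] using hz

lemma hasDerivAt_Sfun {y : ℝ} (hy : |y| < 1) :
    HasDerivAt Sfun (∑' k : ℕ, 2 * (k:ℝ) * sphC k * y ^ (2 * k - 1)) y := by
  set r : ℝ := (|y| + 1) / 2 with hr
  have hr0 : 0 ≤ r := by positivity
  have hr1 : r < 1 := by rw [hr]; linarith
  have hyr : |y| < r := by rw [hr]; linarith [abs_nonneg y]
  have hu : Summable (fun k : ℕ => (2 * (k:ℝ) + 2) * r ^ k) := by
    have h1 := summable_pow_mul_geometric_of_norm_lt_one (R := ℝ) 1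
      (r := r) (by simpa [abs_of_nonneg hr0] using hr1)
    simp only [pow_one] at h1
    have h2 := summable_geometric_of_lt_one hr0 hr1
    have h3 := (h1.mul_left 2).add (h2.mul_left 2)
    refine h3.congr fun k => ?_
    ring
  refine hasDerivAt_tsum_of_isPreconnected (t := Metric.ball (0:ℝ) r)
    (g := fun (k : ℕ) (z : ℝ) => sphC k * z ^ (2 * k))
    (g' := fun (k : ℕ) (z : ℝ) => 2 * (k:ℝ) * sphC k * z ^ (2 * k - 1))
    (y₀ := 0) hu Metric.isOpen_ball (convex_ball (0:ℝ) r).isPreconnected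
    (fun k z _ => ?_) (fun k z hz => ?_) (Metric.mem_ball_self (by positivity))
    (summable_S (by norm_num)) (by simpa [Real.dist_eq] using hyr)
  · have h := (hasDerivAt_pow (2 * k) z).const_mul (sphC k)
    refine h.congr_deriv ?_
    push_cast
    ring
  · have hz' : |z| < r := ball_abs hy hz
    rcases Nat.eq_zero_or_pos k with rfl | hk
    · simp
    rw [Real.norm_eq_abs, abs_mul, abs_mul, abs_mul, abs_two, Nat.abs_cast, abs_pow,
      abs_of_pos (sphC_pos k)]
    apply mul_le_mul
    · nlinarith [sphC_le_one k, sphC_pos k, Nat.cast_nonneg (α := ℝ) k]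
    · calc |z| ^ (2 * k - 1) ≤ r ^ (2 * k - 1) :=
            pow_le_pow_left₀ (abs_nonneg z) hz'.le _
        _ ≤ r ^ k := pow_le_pow_of_le_one hr0 hr1.le (by omega)
    · positivity
    · positivity

lemma hasDerivAt_Gfun {y : ℝ} (hy : |y| < 1) :
    HasDerivAt Gfun (∑' k : ℕ, sphC k * y ^ (2 * k)) y := by
  set r : ℝ := (|y| + 1) / 2 with hr
  have hr0 : 0 ≤ r := by positivity
  have hr1 : r < 1 := by rw [hr]; linarith
  have hyr : |y| < r := by rw [hr]; linarith [abs_nonneg y]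
  refine hasDerivAt_tsum_of_isPreconnected (t := Metric.ball (0:ℝ) r)
    (g := fun (k : ℕ) (z : ℝ) => sphC k / (2 * (k:ℝ) + 1) * z ^ (2 * k + 1))
    (g' := fun (k : ℕ) (z : ℝ) => sphC k * z ^ (2 * k))
    (y₀ := 0) (summable_geometric_of_lt_one hr0 hr1) Metric.isOpen_ball
    (convex_ball (0:ℝ) r).isPreconnected
    (fun k z _ => ?_) (fun k z hz => ?_) (Metric.mem_ball_self (by positivity))
    (summable_G (by norm_num)) (by simpa [Real.dist_eq] using hyr)
  · have h := (hasDerivAt_pow (2 * k + 1) z).const_mul (sphC k / (2 * (k:ℝ) + 1))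
    refine h.congr_deriv ?_
    have h21 : (2 * (k:ℝ) + 1) ≠ 0 := by positivity
    push_cast
    field_simp
  · have hz' : |z| < r := ball_abs hy hz
    rw [Real.norm_eq_abs]
    calc |sphC k * z ^ (2 * k)| ≤ |z| ^ k := sphC_bound k (hz'.trans hr1).le _ (by omega)
      _ ≤ r ^ k := pow_le_pow_left₀ (abs_nonneg z) hz'.le k

lemma T_identity {y : ℝ} (hy : |y| < 1) :
    (1 - y ^ 2) * (∑' k : ℕ, 2 * (k:ℝ) * sphC k * y ^ (2 * k - 1)) = y * Sfun y := by
  have hT := summable_T hy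
  have hterm : ∀ k : ℕ, 2 * ((k:ℝ) + 1) * sphC (k + 1) * y ^ (2 * (k + 1) - 1)
      = (2 * (k:ℝ) + 1) * sphC k * y ^ (2 * k + 1) := by
    intro k
    have he : 2 * (k + 1) - 1 = 2 * k + 1 := by omega
    rw [he]
    linear_combination y ^ (2 * k + 1) * sphC_rec k
  have hshift : (∑' k : ℕ, 2 * (k:ℝ) * sphC k * y ^ (2 * k - 1))
      = ∑' k : ℕ, (2 * (k:ℝ) + 1) * sphC k * y ^ (2 * k + 1) := by
    rw [Summable.tsum_eq_zero_add hT]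
    simp only [Nat.cast_zero, mul_zero, zero_mul, zero_add]
    exact tsum_congr fun k => by push_cast; exact hterm k
  have hTs : Summable (fun k : ℕ => (2 * (k:ℝ) + 1) * sphC k * y ^ (2 * k + 1)) := by
    refine ((summable_nat_add_iff 1).2 hT).congr fun k => ?_
    push_cast
    exact hterm k
  have hTy2 : Summable (fun k : ℕ => 2 * (k:ℝ) * sphC k * y ^ (2 * k + 1)) := by
    refine (hT.mul_left (y ^ 2)).congr fun k => ?_
    rcases k with _ | k
    · simp
    have he : 2 * (k + 1) - 1 = 2 * k + 1 := by omega
    rw [he]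
    push_cast
    ring
  have h1 : y ^ 2 * (∑' k : ℕ, 2 * (k:ℝ) * sphC k * y ^ (2 * k - 1))
      = ∑' k : ℕ, 2 * (k:ℝ) * sphC k * y ^ (2 * k + 1) := by
    rw [← tsum_mul_left]
    refine tsum_congr fun k => ?_
    rcases k with _ | k
    · simp
    have he : 2 * (k + 1) - 1 = 2 * k + 1 := by omega
    rw [he]
    push_cast
    ring
  calc (1 - y ^ 2) * (∑' k : ℕ, 2 * (k:ℝ) * sphC k * y ^ (2 * k - 1))
      = (∑' k : ℕ, 2 * (k:ℝ) * sphC k * y ^ (2 * k - 1))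
        - y ^ 2 * (∑' k : ℕ, 2 * (k:ℝ) * sphC k * y ^ (2 * k - 1)) := by ring
    _ = (∑' k : ℕ, (2 * (k:ℝ) + 1) * sphC k * y ^ (2 * k + 1))
        - ∑' k : ℕ, 2 * (k:ℝ) * sphC k * y ^ (2 * k + 1) := by rw [h1, hshift]
    _ = ∑' k : ℕ, ((2 * (k:ℝ) + 1) * sphC k * y ^ (2 * k + 1)
        - 2 * (k:ℝ) * sphC k * y ^ (2 * k + 1)) := (Summable.tsum_sub hTs hTy2).symm
    _ = ∑' k : ℕ, y * (sphC k * y ^ (2 * k)) := tsum_congr fun k => by ring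
    _ = y * Sfun y := by rw [tsum_mul_left, Sfun]

lemma Sfun_zero : Sfun 0 = 1 := by
  rw [Sfun]
  rw [tsum_eq_single 0 (fun k hk => by simp [zero_pow (by omega : 2 * k ≠ 0)])]
  simp [sphC, Nat.centralBinom_zero]

lemma hasDerivAt_Phi {z : ℝ} (hz : |z| < 1) :
    HasDerivAt (fun w => Sfun w * Real.sqrt (1 - w ^ 2)) 0 z := by
  have hpos : 0 < 1 - z ^ 2 := by nlinarith [abs_nonneg z, sq_abs z]
  have hw0 : Real.sqrt (1 - z ^ 2) ≠ 0 := by positivity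
  have hinner : HasDerivAt (fun w : ℝ => 1 - w ^ 2) (-(2 * z)) z := by
    simpa using ((hasDerivAt_pow 2 z).const_sub 1)
  have hsqrt : HasDerivAt (fun w : ℝ => Real.sqrt (1 - w ^ 2))
      (1 / (2 * Real.sqrt (1 - z ^ 2)) * (-(2 * z))) z :=
    (Real.hasDerivAt_sqrt hpos.ne').comp z hinner
  have hmul := (hasDerivAt_Sfun hz).mul hsqrt
  refine hmul.congr_deriv ?_
  have hww : Real.sqrt (1 - z ^ 2) * Real.sqrt (1 - z ^ 2) = 1 - z ^ 2 :=
    Real.mul_self_sqrt hpos.le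
  have hkey := T_identity hz
  set T := ∑' k : ℕ, 2 * (k:ℝ) * sphC k * z ^ (2 * k - 1) with hTdef
  have e1 : T * Real.sqrt (1 - z ^ 2) = z * Sfun z / Real.sqrt (1 - z ^ 2) := by
    rw [eq_div_iff hw0, mul_assoc, hww]
    linarith [hkey]
  have e2 : Sfun z * (1 / (2 * Real.sqrt (1 - z ^ 2)) * -(2 * z))
      = -(z * Sfun z / Real.sqrt (1 - z ^ 2)) := by
    field_simp
  rw [e1, e2]
  ring

lemma Sfun_eq {y : ℝ} (hy : |y| < 1) : Sfun y = 1 / Real.sqrt (1 - y ^ 2) := by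
  have habs : ∀ z ∈ Set.Icc (-|y|) |y|, |z| < 1 := fun z hz =>
    lt_of_le_of_lt (abs_le.mpr ⟨hz.1, hz.2⟩) hy
  have hconst := constant_of_has_deriv_right_zero
    (f := fun w => Sfun w * Real.sqrt (1 - w ^ 2)) (a := -|y|) (b := |y|)
    (fun z hz => (hasDerivAt_Phi (habs z hz)).continuousAt.continuousWithinAt)
    (fun z hz => (hasDerivAt_Phi (habs z ⟨hz.1, hz.2.le⟩)).hasDerivWithinAt)
  have hy_mem : y ∈ Set.Icc (-|y|) |y| := ⟨neg_abs_le y, le_abs_self y⟩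
  have h0_mem : (0:ℝ) ∈ Set.Icc (-|y|) |y| := ⟨by simp [neg_nonpos, abs_nonneg], abs_nonneg y⟩
  have h1 := hconst y hy_mem
  have h2 := hconst 0 h0_mem
  have hval : Sfun y * Real.sqrt (1 - y ^ 2) = 1 := by
    have := h1.trans h2.symm
    simpa [Sfun_zero] using this
  have hpos : 0 < 1 - y ^ 2 := by nlinarith [abs_nonneg y, sq_abs y]
  have hw0 : Real.sqrt (1 - y ^ 2) ≠ 0 := by positivity
  field_simp
  linarith [hval]

lemma Gfun_zero : Gfun 0 = 0 := by
  rw [Gfun]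
  rw [tsum_congr (fun k : ℕ => by
    rw [zero_pow (by omega : 2 * k + 1 ≠ 0), mul_zero] : ∀ k : ℕ,
      sphC k / (2 * (k:ℝ) + 1) * (0:ℝ) ^ (2 * k + 1) = 0)]
  exact tsum_zero

lemma Gfun_eq_arcsin {y : ℝ} (hy : |y| < 1) : Gfun y = Real.arcsin y := by
  have habs : ∀ z ∈ Set.Icc (-|y|) |y|, |z| < 1 := fun z hz =>
    lt_of_le_of_lt (abs_le.mpr ⟨hz.1, hz.2⟩) hy
  have hD : ∀ z : ℝ, |z| < 1 → HasDerivAt (fun w => Gfun w - Real.arcsin w) 0 z := by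
    intro z hz
    have h1 : z ≠ -1 := by intro h; rw [h] at hz; simp at hz
    have h2 : z ≠ 1 := by intro h; rw [h] at hz; simp at hz
    have := (hasDerivAt_Gfun hz).sub (Real.hasDerivAt_arcsin h1 h2)
    have hS : (∑' k : ℕ, sphC k * z ^ (2 * k)) = 1 / Real.sqrt (1 - z ^ 2) := Sfun_eq hz
    rw [hS] at this
    exact this.congr_deriv (by simp)
  have hconst := constant_of_has_deriv_right_zero
    (f := fun w => Gfun w - Real.arcsin w) (a := -|y|) (b := |y|)
    (fun z hz => (hD z (habs z hz)).continuousAt.continuousWithinAt)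
    (fun z hz => (hD z (habs z ⟨hz.1, hz.2.le⟩)).hasDerivWithinAt)
  have hy_mem : y ∈ Set.Icc (-|y|) |y| := ⟨neg_abs_le y, le_abs_self y⟩
  have h0_mem : (0:ℝ) ∈ Set.Icc (-|y|) |y| := ⟨by simp [neg_nonpos, abs_nonneg], abs_nonneg y⟩
  have h1 := hconst y hy_mem
  have h2 := hconst 0 h0_mem
  have : Gfun y - Real.arcsin y = 0 := by
    have := h1.trans h2.symm
    simpa [Gfun_zero] using this
  linarith

lemma powsum {n m : ℕ} (x : Fin m → EuclideanSpace ℝ (Fin (n + 1))) (t : Fin m → ℝ) (p : ℕ) :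
    0 ≤ ∑ i, ∑ j, t i * t j * (inner ℝ (x i) (x j) : ℝ) ^ p := by
  have hinner : ∀ i j, (inner ℝ (x i) (x j) : ℝ) = ∑ q : Fin (n + 1), x i q * x j q := by
    intro i j
    simp [PiLp.inner_apply, RCLike.inner_apply, conj_trivial]
    exact Finset.sum_congr rfl fun _ _ => mul_comm _ _
  have hpow : ∀ i j, (inner ℝ (x i) (x j) : ℝ) ^ p
      = ∑ g ∈ Fintype.piFinset (fun _ : Fin p => (Finset.univ : Finset (Fin (n + 1)))),
          (∏ l, x i (g l)) * (∏ l, x j (g l)) := by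
    intro i j
    rw [hinner]
    rw [show (∑ q : Fin (n + 1), x i q * x j q) ^ p
        = ∏ _l : Fin p, (∑ q : Fin (n + 1), x i q * x j q) by
      rw [Finset.prod_const, Finset.card_univ, Fintype.card_fin]]
    rw [Finset.prod_univ_sum]
    exact Finset.sum_congr rfl fun g _ => by rw [Finset.prod_mul_distrib]
  calc ∑ i, ∑ j, t i * t j * (inner ℝ (x i) (x j) : ℝ) ^ p
      = ∑ i, ∑ j, ∑ g ∈ Fintype.piFinset (fun _ : Fin p => (Finset.univ : Finset (Fin (n + 1)))),
          (t i * ∏ l, x i (g l)) * (t j * ∏ l, x j (g l)) := by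
        refine Finset.sum_congr rfl fun i _ => Finset.sum_congr rfl fun j _ => ?_
        rw [hpow, Finset.mul_sum]
        exact Finset.sum_congr rfl fun g _ => by ring
    _ = ∑ i, ∑ g ∈ Fintype.piFinset (fun _ : Fin p => (Finset.univ : Finset (Fin (n + 1)))),
          ∑ j, (t i * ∏ l, x i (g l)) * (t j * ∏ l, x j (g l)) :=
        Finset.sum_congr rfl fun i _ => Finset.sum_comm
    _ = ∑ g ∈ Fintype.piFinset (fun _ : Fin p => (Finset.univ : Finset (Fin (n + 1)))),
          ∑ i, ∑ j, (t i * ∏ l, x i (g l)) * (t j * ∏ l, x j (g l)) := Finset.sum_comm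
    _ = ∑ g ∈ Fintype.piFinset (fun _ : Fin p => (Finset.univ : Finset (Fin (n + 1)))),
          (∑ i, t i * ∏ l, x i (g l)) * (∑ j, t j * ∏ l, x j (g l)) :=
        Finset.sum_congr rfl fun g _ => (Finset.sum_mul_sum _ _ _ _).symm
    _ = ∑ g ∈ Fintype.piFinset (fun _ : Fin p => (Finset.univ : Finset (Fin (n + 1)))),
          (∑ i, t i * ∏ l, x i (g l)) ^ 2 :=
        Finset.sum_congr rfl fun g _ => (sq _).symm
    _ ≥ 0 := Finset.sum_nonneg fun g _ => sq_nonneg _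

/-- The geodesic (great-circle) distance `d(x,y) = arccos⟨x,y⟩` on the unit sphere
`Sⁿ` (`n ≥ 1`) is a kernel of negative type. -/
theorem sphere_geodesic_dist_negative_type (n : ℕ) (hn : 1 ≤ n)
    (m : ℕ) (x : Fin m → EuclideanSpace ℝ (Fin (n + 1)))
    (hx : ∀ i, ‖x i‖ = 1)
    (t : Fin m → ℝ) (ht : (∑ i, t i) = 0) :
    ∑ i, ∑ j, t i * t j * Real.arccos (inner ℝ (x i) (x j)) ≤ 0 := by
  set a : Fin m → Fin m → ℝ := fun i j => (inner ℝ (x i) (x j) : ℝ) with ha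
  have haij : ∀ i j, |a i j| ≤ 1 := by
    intro i j
    have h := abs_real_inner_le_norm (x i) (x j)
    simpa [ha, hx i, hx j] using h
  -- Step 1: nonnegativity of the arcsin-sum for scaling r < 1
  have hF : ∀ r : ℝ, 0 ≤ r → r < 1 →
      0 ≤ ∑ i, ∑ j, t i * t j * Real.arcsin (r * a i j) := by
    intro r hr0 hr1
    have hva : ∀ i j, |r * a i j| < 1 := by
      intro i j
      rw [abs_mul]
      calc |r| * |a i j| ≤ |r| * 1 := mul_le_mul_of_nonneg_left (haij i j) (abs_nonneg r)
        _ = r := by rw [mul_one, abs_of_nonneg hr0]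
        _ < 1 := hr1
    have hsum : ∀ i j : Fin m, Summable
        (fun k : ℕ => t i * t j * (sphC k / (2 * (k:ℝ) + 1) * (r * a i j) ^ (2 * k + 1))) :=
      fun i j => (summable_G (hva i j)).mul_left _
    have step1 : ∑ i, ∑ j, t i * t j * Real.arcsin (r * a i j)
        = ∑ i, ∑ j, ∑' k : ℕ,
            t i * t j * (sphC k / (2 * (k:ℝ) + 1) * (r * a i j) ^ (2 * k + 1)) := by
      refine Finset.sum_congr rfl fun i _ => Finset.sum_congr rfl fun j _ => ?_
      rw [← Gfun_eq_arcsin (hva i j), Gfun, ← tsum_mul_left]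
    have step2 : ∑ i, ∑ j, ∑' k : ℕ,
          t i * t j * (sphC k / (2 * (k:ℝ) + 1) * (r * a i j) ^ (2 * k + 1))
        = ∑' k : ℕ, ∑ i, ∑ j,
            t i * t j * (sphC k / (2 * (k:ℝ) + 1) * (r * a i j) ^ (2 * k + 1)) := by
      calc ∑ i, ∑ j, ∑' k : ℕ,
            t i * t j * (sphC k / (2 * (k:ℝ) + 1) * (r * a i j) ^ (2 * k + 1))
          = ∑ i, ∑' k : ℕ, ∑ j,
              t i * t j * (sphC k / (2 * (k:ℝ) + 1) * (r * a i j) ^ (2 * k + 1)) :=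
            Finset.sum_congr rfl fun i _ => (Summable.tsum_finsetSum fun j _ => hsum i j).symm
        _ = ∑' k : ℕ, ∑ i, ∑ j,
              t i * t j * (sphC k / (2 * (k:ℝ) + 1) * (r * a i j) ^ (2 * k + 1)) :=
            (Summable.tsum_finsetSum fun i _ => summable_sum fun j _ => hsum i j).symm
    rw [step1, step2]
    apply tsum_nonneg
    intro k
    have hterm : ∑ i, ∑ j, t i * t j * (sphC k / (2 * (k:ℝ) + 1) * (r * a i j) ^ (2 * k + 1))
        = (sphC k / (2 * (k:ℝ) + 1) * r ^ (2 * k + 1))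
          * ∑ i, ∑ j, t i * t j * a i j ^ (2 * k + 1) := by
      rw [Finset.mul_sum]
      refine Finset.sum_congr rfl fun i _ => ?_
      rw [Finset.mul_sum]
      refine Finset.sum_congr rfl fun j _ => ?_
      rw [mul_pow]
      ring
    rw [hterm]
    apply mul_nonneg
    · have := sphC_pos k
      positivity
    · exact powsum x t (2 * k + 1)
  -- Step 2: continuity as r → 1⁻
  have hcontF : Continuous (fun r : ℝ => ∑ i, ∑ j, t i * t j * Real.arcsin (r * a i j)) := by
    refine continuous_finset_sum _ fun i _ => continuous_finset_sum _ fun j _ => ?_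
    exact continuous_const.mul (Real.continuous_arcsin.comp (continuous_id.mul continuous_const))
  have hnb : (nhdsWithin (1:ℝ) (Set.Ico 0 1)).NeBot := by
    refine mem_closure_iff_nhdsWithin_neBot.1 ?_
    rw [closure_Ico (by norm_num : (0:ℝ) ≠ 1)]
    exact ⟨zero_le_one, le_refl 1⟩
  have h1 : 0 ≤ ∑ i, ∑ j, t i * t j * Real.arcsin (a i j) := by
    have htend : Filter.Tendsto (fun r : ℝ => ∑ i, ∑ j, t i * t j * Real.arcsin (r * a i j))
        (nhdsWithin (1:ℝ) (Set.Ico 0 1))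
        (nhds (∑ i, ∑ j, t i * t j * Real.arcsin ((1:ℝ) * a i j))) :=
      (hcontF.tendsto 1).mono_left nhdsWithin_le_nhds
    have hev : ∀ᶠ r in nhdsWithin (1:ℝ) (Set.Ico 0 1),
        0 ≤ ∑ i, ∑ j, t i * t j * Real.arcsin (r * a i j) :=
      eventually_nhdsWithin_of_forall fun r hr => hF r hr.1 hr.2
    have := ge_of_tendsto htend hev
    simpa using this
  -- Step 3: arccos = π/2 - arcsin and ∑ t = 0
  have hzero : ∀ i, ∑ j, Real.pi / 2 * (t i * t j) = 0 := by
    intro i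
    calc ∑ j, Real.pi / 2 * (t i * t j) = (Real.pi / 2 * t i) * ∑ j, t j := by
          rw [Finset.mul_sum]
          exact Finset.sum_congr rfl fun j _ => by ring
      _ = 0 := by rw [ht, mul_zero]
  have hexp : ∑ i, ∑ j, t i * t j * Real.arccos (a i j)
      = ∑ i, ((∑ j, Real.pi / 2 * (t i * t j))
          - ∑ j, t i * t j * Real.arcsin (a i j)) := by
    refine Finset.sum_congr rfl fun i _ => ?_
    rw [← Finset.sum_sub_distrib]
    refine Finset.sum_congr rfl fun j _ => ?_
    rw [Real.arccos_eq_pi_div_two_sub_arcsin]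
    ring
  rw [hexp]
  have : ∑ i, ((∑ j, Real.pi / 2 * (t i * t j)) - ∑ j, t i * t j * Real.arcsin (a i j))
      = - ∑ i, ∑ j, t i * t j * Real.arcsin (a i j) := by
    rw [Finset.sum_sub_distrib]
    rw [Finset.sum_congr rfl fun i _ => hzero i]
    simp
  rw [this]
  linarith [h1]
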